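/- Let β = 1.02. The function g(s) = 1 - (1 + βs + βs²)e^{-βs} has exactly one zero in (0,∞), and this zero lies in the interval (1,2). -/

import Mathlib

open Real

noncomputable def g8 (s : ℝ) : ℝ := 1 - (1 + 1.02 * s + 1.02 * s ^ 2) * Real.exp (-(1.02 : ℝ) * s)

lemma g8_deriv (s : ℝ) :
    HasDerivAt g8 (1.02 * s * Real.exp (-(1.02:ℝ) * s) * (1.02 * s + 1.02 - 2)) s := by
  have h1 : HasDerivAt (fun s : ℝ => -(1.02:ℝ) * s) (-(1.02:ℝ)) s := by
    simpa using (hasDerivAt_id s).const_mul (-(1.02:ℝ))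
  have h2 := h1.exp
  have ha : HasDerivAt (fun s : ℝ => (1.02:ℝ) * s) 1.02 s := by
    simpa using (hasDerivAt_id s).const_mul (1.02:ℝ)
  have hb : HasDerivAt (fun s : ℝ => (1.02:ℝ) * s ^ 2) (1.02 * (2 * s)) s := by
    simpa using (hasDerivAt_pow 2 s).const_mul (1.02:ℝ)
  have h3 := ((hasDerivAt_const s (1:ℝ)).add ha).add hb
  have h4 := (hasDerivAt_const s (1:ℝ)).sub (h3.mul h2)
  convert h4 using 1
  · rfl
  · rfl
  · rfl
  · simp only [Pi.add_apply]
    ring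

lemma g8_cont : Continuous g8 := by
  have : ∀ x, HasDerivAt g8 _ x := g8_deriv
  exact continuous_iff_continuousAt.2 fun x => (g8_deriv x).continuousAt

lemma g8_mono : StrictMonoOn g8 (Set.Ici (49/51 : ℝ)) := by
  apply strictMonoOn_of_deriv_pos (convex_Ici _) (g8_cont.continuousOn)
  intro x hx
  rw [interior_Ici, Set.mem_Ioi] at hx
  rw [(g8_deriv x).deriv]
  have hx0 : (0:ℝ) < x := lt_trans (by norm_num) hx
  have h1 : (0:ℝ) < 1.02 * x + 1.02 - 2 := by nlinarith
  have h2 : (0:ℝ) < 1.02 * x * Real.exp (-(1.02:ℝ) * x) := by positivity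
  exact mul_pos h2 h1

lemma g8_anti : StrictAntiOn g8 (Set.Icc (0:ℝ) (49/51 : ℝ)) := by
  apply strictAntiOn_of_deriv_neg (convex_Icc _ _) (g8_cont.continuousOn)
  intro x hx
  rw [interior_Icc, Set.mem_Ioo] at hx
  rw [(g8_deriv x).deriv]
  have h1 : 1.02 * x + 1.02 - 2 < 0 := by nlinarith [hx.2]
  have h2 : (0:ℝ) < 1.02 * x * Real.exp (-(1.02:ℝ) * x) := by
    have := hx.1; positivity
  exact mul_neg_of_pos_of_neg h2 h1

lemma g8_zero : g8 0 = 0 := by simp [g8]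

lemma exp_102_lt : Real.exp 1.02 < 3.04 := by
  have h1 : Real.exp 1 < 2.7182818286 := Real.exp_one_lt_d9
  have h2 : Real.exp 0.02 ≤ 1/0.98 := by
    have h := Real.add_one_le_exp (-0.02:ℝ)
    have hp : (0:ℝ) < Real.exp (-0.02) := Real.exp_pos _
    rw [show (0.02:ℝ) = -(-0.02) by norm_num, Real.exp_neg]
    rw [inv_le_comm₀ hp (by norm_num)]
    linarith
  have h3 : Real.exp 1.02 = Real.exp 1 * Real.exp 0.02 := by
    rw [← Real.exp_add]; norm_num
  have hp : (0:ℝ) < Real.exp 0.02 := Real.exp_pos _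
  nlinarith

lemma exp_204_gt : (7.12:ℝ) < Real.exp 2.04 := by
  have h1 : (2.7182818283:ℝ) < Real.exp 1 := Real.exp_one_gt_d9
  have h2 : (1.04:ℝ) ≤ Real.exp 0.04 := by
    have := Real.add_one_le_exp (0.04:ℝ); linarith
  have h3 : Real.exp 2.04 = Real.exp 1 * Real.exp 1 * Real.exp 0.04 := by
    rw [← Real.exp_add, ← Real.exp_add]; norm_num
  nlinarith [Real.exp_pos (1:ℝ)]

lemma g8_one_neg : g8 1 < 0 := by
  have h : Real.exp (-(1.02:ℝ) * 1) = (Real.exp 1.02)⁻¹ := by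
    rw [← Real.exp_neg]; norm_num
  have he := exp_102_lt
  have hp : (0:ℝ) < Real.exp 1.02 := Real.exp_pos _
  have : (1:ℝ) < 3.04 * (Real.exp 1.02)⁻¹ := by
    rw [lt_mul_inv_iff₀ hp]; linarith
  simp only [g8, h]
  nlinarith

lemma g8_two_pos : 0 < g8 2 := by
  have h : Real.exp (-(1.02:ℝ) * 2) = (Real.exp 2.04)⁻¹ := by
    rw [← Real.exp_neg]; norm_num
  have he := exp_204_gt
  have hp : (0:ℝ) < Real.exp 2.04 := Real.exp_pos _
  have : 7.12 * (Real.exp 2.04)⁻¹ < 1 := by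
    rw [mul_inv_lt_iff₀ hp]; linarith
  simp only [g8, h]
  nlinarith

lemma g8_neg_on_unit : ∀ u : ℝ, 0 < u → u ≤ 1 → g8 u < 0 := by
  intro u hu hu1
  rcases le_or_gt u (49/51) with h | h
  · have := g8_anti ⟨le_rfl, by norm_num⟩ ⟨hu.le, h⟩ hu
    rw [g8_zero] at this
    exact this
  · rcases eq_or_lt_of_le hu1 with rfl | h1
    · exact g8_one_neg
    · have := g8_mono h.le (by norm_num : (1:ℝ) ∈ Set.Ici (49/51:ℝ)) h1
      linarith [g8_one_neg]

theorem stmt_8 :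
    ∃ s : ℝ,
      (0 < s ∧ 1 - (1 + 1.02 * s + 1.02 * s ^ 2) * Real.exp (-(1.02 : ℝ) * s) = 0) ∧
      (∀ t : ℝ, 0 < t →
        1 - (1 + 1.02 * t + 1.02 * t ^ 2) * Real.exp (-(1.02 : ℝ) * t) = 0 → t = s) ∧
      s ∈ Set.Ioo (1 : ℝ) 2 := by
  have hcont : ContinuousOn g8 (Set.Icc (1:ℝ) 2) := g8_cont.continuousOn
  have hivt := intermediate_value_Ioo (by norm_num : (1:ℝ) ≤ 2) hcont
  have h0 : (0:ℝ) ∈ Set.Ioo (g8 1) (g8 2) := ⟨g8_one_neg, g8_two_pos⟩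
  obtain ⟨s, hs, hgs⟩ := hivt h0
  refine ⟨s, ⟨by linarith [hs.1], hgs⟩, ?_, hs⟩
  intro t ht hgt
  have hgt' : g8 t = 0 := hgt
  rcases le_or_gt t 1 with h | h
  · exact absurd hgt' (ne_of_lt (g8_neg_on_unit t ht h))
  · have hts : g8 t = g8 s := by rw [hgt', hgs]
    exact g8_mono.injOn (by simp only [Set.mem_Ici]; linarith)
      (by simp only [Set.mem_Ici]; linarith [hs.1]) hts
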